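/- Let Σ be a finite set of positive integers, let w ∈ Σ⁺ be a primitive word of length m, and let n be a divisor of m with n < m. Then the polynomial P(w) ∈ ℤ[X] is not divisible by the polynomial (X^m − 1)/(X^n − 1) = 1 + X^n + X^{2n} + ⋯ + X^{m−n}. -/

import Mathlib

open Polynomial

/-- Concatenation power of a word. -/
def wpow {α : Type*} (u : List α) : ℕ → List α
  | 0 => []
  | k + 1 => u ++ wpow u k

/-- The characteristic polynomial `P(w)` of a word. -/
noncomputable def wordPoly (w : List ℕ) : Polynomial ℤ :=
  ∑ i ∈ Finset.range w.length, Polynomial.C (w.getD i 0 : ℤ) * Polynomial.X ^ i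

/-- A nonempty word is primitive if it is not a proper power. -/
def Primitive (w : List ℕ) : Prop :=
  w ≠ [] ∧ ∀ (u : List ℕ) (k : ℕ), 1 < k → w ≠ wpow u k

lemma wpow_length {α : Type*} (u : List α) (k : ℕ) : (wpow u k).length = k * u.length := by
  induction k with
  | zero => simp [wpow]
  | succ k ih => simp [wpow, ih]; ring

lemma getElem_wpow {α : Type*} (u : List α) (hu : u ≠ []) (k i : ℕ)
    (h : i < (wpow u k).length) :
    (wpow u k)[i] = u[i % u.length]'(Nat.mod_lt _ (List.length_pos_iff.mpr hu)) := by
  induction k generalizing i with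
  | zero => simp [wpow] at h
  | succ k ih =>
    simp only [wpow] at h ⊢
    by_cases hi : i < u.length
    · rw [List.getElem_append_left hi]
      congr 1
      exact (Nat.mod_eq_of_lt hi).symm
    · push_neg at hi
      rw [List.getElem_append_right hi, ih]
      congr 1
      exact (Nat.mod_eq_sub_mod hi).symm

lemma wordPoly_coeff (w : List ℕ) (d : ℕ) :
    (wordPoly w).coeff d = if d < w.length then (w.getD d 0 : ℤ) else 0 := by
  simp [wordPoly, Polynomial.finset_sum_coeff, Polynomial.coeff_C_mul, Polynomial.coeff_X_pow,
    mul_ite, mul_one, mul_zero, Finset.sum_ite_eq]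

theorem primitive_wordPoly_not_dvd
    (S : Finset ℕ) (hS : ∀ a ∈ S, 0 < a)
    (w : List ℕ) (hw : ∀ a ∈ w, a ∈ S) (hprim : Primitive w)
    (m n : ℕ) (hm : w.length = m) (hdvd : n ∣ m) (hlt : n < m) :
    ¬ (∑ i ∈ Finset.range (m / n), (Polynomial.X : Polynomial ℤ) ^ (n * i)) ∣ wordPoly w := by
  intro hdiv
  obtain ⟨R, hR⟩ := hdiv
  set k := m / n with hk
  have hm0 : 0 < m := by omega
  have hn : 0 < n := by
    rcases Nat.eq_zero_or_pos n with h | h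
    · subst h; have := Nat.eq_zero_of_zero_dvd hdvd; omega
    · exact h
  have hmk : n * k = m := Nat.mul_div_cancel' hdvd
  have hk1 : 1 < k := by
    rcases Nat.lt_or_ge 1 k with h | h
    · exact h
    · exfalso; interval_cases k <;> omega
  -- positivity of letters
  have hpos : ∀ i, i < m → 0 < w.getD i 0 := by
    intro i hi
    rw [List.getD_eq_getElem w 0 (by omega)]
    exact hS _ (hw _ (List.getElem_mem _))
  -- coefficients of P
  have hP : ∀ d, (wordPoly w).coeff d = if d < m then (w.getD d 0 : ℤ) else 0 := by
    intro d; rw [wordPoly_coeff, hm]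
  have hPne : wordPoly w ≠ 0 := by
    intro h
    have := hP (m - 1)
    rw [h] at this
    simp only [Polynomial.coeff_zero] at this
    rw [if_pos (by omega)] at this
    have := hpos (m - 1) (by omega)
    omega
  have hRne : R ≠ 0 := by rintro rfl; rw [mul_zero] at hR; exact hPne hR
  set Q : Polynomial ℤ := ∑ i ∈ Finset.range k, (Polynomial.X : Polynomial ℤ) ^ (n * i) with hQ
  have hQcoeff : ∀ d, Q.coeff d = ∑ t ∈ Finset.range k, if d = n * t then (1 : ℤ) else 0 := by
    intro d
    rw [hQ, Polynomial.finset_sum_coeff]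
    exact Finset.sum_congr rfl fun t _ => Polynomial.coeff_X_pow _ _
  have hQtop : Q.coeff (n * (k - 1)) = 1 := by
    rw [hQcoeff, Finset.sum_eq_single (k - 1)]
    · simp
    · intro t ht htne
      rw [if_neg]
      intro h
      exact htne (Nat.eq_of_mul_eq_mul_left hn h.symm)
    · intro h; exact absurd (Finset.mem_range.mpr (by omega)) h
  have hQhigh : ∀ d, n * (k - 1) < d → Q.coeff d = 0 := by
    intro d hd
    rw [hQcoeff]
    refine Finset.sum_eq_zero fun t ht => ?_
    rw [if_neg]
    intro h
    have ht' : t ≤ k - 1 := by have := Finset.mem_range.mp ht; omega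
    have h2 := Nat.mul_le_mul_left n ht'
    omega
  have hQne : Q ≠ 0 := fun h => by simp [h] at hQtop
  have hQdeg : Q.natDegree = n * (k - 1) := by
    refine le_antisymm ?_ (Polynomial.le_natDegree_of_ne_zero (by rw [hQtop]; norm_num))
    rw [Polynomial.natDegree_le_iff_coeff_eq_zero]
    exact hQhigh
  have hPdeg : (wordPoly w).natDegree = m - 1 := by
    refine le_antisymm ?_ (Polynomial.le_natDegree_of_ne_zero ?_)
    · rw [Polynomial.natDegree_le_iff_coeff_eq_zero]
      intro N hN
      rw [hP, if_neg (by omega)]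
    · rw [hP, if_pos (by omega)]
      have := hpos (m - 1) (by omega)
      exact_mod_cast this.ne'
  have hRdeg : R.natDegree = n - 1 := by
    have := Polynomial.natDegree_mul hQne hRne
    rw [← hR, hPdeg, hQdeg] at this
    have h1 : n * (k - 1) = m - n := by
      have : n * (k - 1) = n * k - n := by rw [Nat.mul_sub_one]
      omega
    omega
  have hRcoeff0 : ∀ v, n ≤ v → R.coeff v = 0 := by
    intro v hv
    exact Polynomial.coeff_eq_zero_of_natDegree_lt (by omega)
  -- the key coefficient identity
  have hkey : ∀ i j, i < k → j < n → (w.getD (n * i + j) 0 : ℤ) = R.coeff j := by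
    intro i j hi hj
    have hlt' : n * i + j < m := by
      have : n * (i + 1) ≤ n * k := Nat.mul_le_mul_left n (by omega)
      rw [Nat.mul_add] at this
      omega
    have h1 : (wordPoly w).coeff (n * i + j) = (w.getD (n * i + j) 0 : ℤ) := by
      rw [hP, if_pos hlt']
    have h2 : (Q * R).coeff (n * i + j)
        = ∑ t ∈ Finset.range k, if n * t ≤ n * i + j then R.coeff (n * i + j - n * t) else 0 := by
      rw [hQ, Finset.sum_mul, Polynomial.finset_sum_coeff]
      exact Finset.sum_congr rfl fun t _ => by rw [mul_comm, Polynomial.coeff_mul_X_pow']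
    have h3 : (∑ t ∈ Finset.range k, if n * t ≤ n * i + j then R.coeff (n * i + j - n * t) else 0)
        = R.coeff j := by
      rw [Finset.sum_eq_single i]
      · rw [if_pos (by omega)]
        congr 1
        omega
      · intro t ht htne
        rcases Nat.lt_or_ge t i with h | h
        · rw [if_pos]
          · apply hRcoeff0
            have : n * (t + 1) ≤ n * i := Nat.mul_le_mul_left n (by omega)
            rw [Nat.mul_add] at this
            omega
          · have : n * t ≤ n * i := Nat.mul_le_mul_left n (by omega)
            omega
        · have hti : i < t := lt_of_le_of_ne h (fun h' => htne h'.symm)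
          rw [if_neg]
          have : n * (i + 1) ≤ n * t := Nat.mul_le_mul_left n (by omega)
          rw [Nat.mul_add] at this
          omega
      · intro h; exact absurd (Finset.mem_range.mpr hi) h
    rw [← h1, hR, h2, h3]
  -- build the period word
  set u : List ℕ := w.take n with hu
  have hulen : u.length = n := by
    rw [hu, List.length_take, hm]
    omega
  have hune : u ≠ [] := by
    intro h
    rw [h] at hulen
    simp at hulen
    omega
  have hweq : w = wpow u k := by
    apply List.ext_getElem
    · rw [wpow_length, hulen, hm]
      rw [Nat.mul_comm]
      omega
    · intro i h1 h2
      rw [getElem_wpow u hune k i h2]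
      have him : i < m := by omega
      have hmod : i % n < n := Nat.mod_lt _ hn
      have hidiv : i / n < k := by
        apply Nat.div_lt_of_lt_mul
        omega
      have e1 : (w.getD i 0 : ℤ) = R.coeff (i % n) := by
        have := hkey (i / n) (i % n) hidiv hmod
        rwa [Nat.div_add_mod] at this
      have e2 : (w.getD (i % n) 0 : ℤ) = R.coeff (i % n) := by
        have := hkey 0 (i % n) (by omega) hmod
        simpa using this
      have e3 : w.getD i 0 = w.getD (i % n) 0 := by exact_mod_cast e1.trans e2.symm
      have e4 : u[i % u.length]'(Nat.mod_lt _ (List.length_pos_iff.mpr hune))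
          = w[i % u.length]'(by rw [hulen]; have := Nat.mod_lt i hn; omega) :=
        List.getElem_take
      rw [e4, ← List.getD_eq_getElem w 0, ← List.getD_eq_getElem w 0, hulen, e3]
  exact hprim.2 u k hk1 hweq
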